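/- The limit as w → 0 of ( (-1)^p / 2 ) · ( (2π)^{2p} e^{2πw} A_{2p-1}(e^{2πw}) / ( (2p-1)! (1 - e^{2πw})^{2p} ) - 1/w^{2p} ) equals ζ(2p), for every integer p ≥ 1. -/

import Mathlib

open Complex Polynomial Filter

/-- The Eulerian polynomials, defined by the recurrence
`A 0 = 1`, `A (n+1) = (1 + n*X) * A n + X*(1-X) * (A n)'`. -/
noncomputable def eulerianPoly : ℕ → Polynomial ℤ
  | 0 => 1
  | n + 1 => (1 + Polynomial.C (n : ℤ) * Polynomial.X) * eulerianPoly n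
      + Polynomial.X * (1 - Polynomial.X) * Polynomial.derivative (eulerianPoly n)

/-- The Eulerian numbers `E(n,k)`, coefficients of the Eulerian polynomials. -/
noncomputable def eulerianNum (n k : ℕ) : ℤ := (eulerianPoly n).coeff k

open Finset
open scoped ContDiff



lemma my_iteratedDeriv_one_add {f : ℝ → ℝ} (n : ℕ) (hn : 1 ≤ n) :
    iteratedDeriv n (fun x => f x + 1) = iteratedDeriv n f := by
  obtain ⟨m, rfl⟩ := Nat.exists_eq_add_of_le hn
  rw [add_comm 1 m]
  have h : (deriv fun x => f x + 1) = deriv f := funext fun x => deriv_add_const (1:ℝ)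
  rw [iteratedDeriv_succ', iteratedDeriv_succ', h]

lemma my_iteratedDeriv_mul {f g : ℝ → ℝ} (hf : ContDiff ℝ ∞ f) (hg : ContDiff ℝ ∞ g) (n : ℕ) :
    iteratedDeriv n (fun y => f y * g y)
      = fun x => ∑ i ∈ Finset.range (n+1),
          (n.choose i : ℝ) * iteratedDeriv i f x * iteratedDeriv (n-i) g x := by
  induction n with
  | zero => simp
  | succ n ih =>
    have hdf : ∀ k, Differentiable ℝ (iteratedDeriv k f) := fun k =>
      hf.differentiable_iteratedDeriv k (by exact_mod_cast WithTop.coe_lt_top _)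
    have hdg : ∀ k, Differentiable ℝ (iteratedDeriv k g) := fun k =>
      hg.differentiable_iteratedDeriv k (by exact_mod_cast WithTop.coe_lt_top _)
    funext x
    rw [iteratedDeriv_succ, ih]
    rw [deriv_fun_sum (fun i _ => by
      exact (((hdf i).differentiableAt.const_mul _).mul (hdg (n-i)).differentiableAt))]
    have hterm : ∀ i ∈ Finset.range (n+1),
        deriv (fun x => (n.choose i : ℝ) * iteratedDeriv i f x * iteratedDeriv (n-i) g x) x
        = (n.choose i : ℝ) * iteratedDeriv (i+1) f x * iteratedDeriv (n-i) g x
          + (n.choose i : ℝ) * iteratedDeriv i f x * iteratedDeriv (n-i+1) g x := by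
      intro i _
      rw [deriv_fun_mul (((hdf i).differentiableAt).const_mul _) (hdg (n-i)).differentiableAt,
        deriv_const_mul _ (hdf i).differentiableAt, ← iteratedDeriv_succ, ← iteratedDeriv_succ]
    rw [Finset.sum_congr rfl hterm, Finset.sum_add_distrib]
    have key : ∑ i ∈ Finset.range (n+2), ((n+1).choose i : ℝ)
          * iteratedDeriv i f x * iteratedDeriv (n+1-i) g x
        = ∑ i ∈ Finset.range (n+1), (n.choose i : ℝ) * iteratedDeriv (i+1) f x * iteratedDeriv (n-i) g x
          + ∑ i ∈ Finset.range (n+1), (n.choose i : ℝ) * iteratedDeriv i f x * iteratedDeriv (n-i+1) g x := by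
      rw [Finset.sum_range_succ' _ (n+1)]
      have e1 : ∀ i ∈ Finset.range (n+1), ((n+1).choose (i+1) : ℝ)
            * iteratedDeriv (i+1) f x * iteratedDeriv (n+1-(i+1)) g x
          = (n.choose i : ℝ) * iteratedDeriv (i+1) f x * iteratedDeriv (n-i) g x
            + (n.choose (i+1) : ℝ) * iteratedDeriv (i+1) f x * iteratedDeriv (n-i) g x := by
        intro i _
        have : n+1-(i+1) = n-i := by omega
        rw [this, Nat.choose_succ_succ]
        push_cast
        ring
      rw [Finset.sum_congr rfl e1, Finset.sum_add_distrib, add_assoc]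
      congr 1
      -- remaining: ∑ C(n,i+1) f_{i+1} g_{n-i} + C(n+1,0) f_0 g_{n+1} = ∑ C(n,i) f_i g_{n-i+1}
      rw [Finset.sum_range_succ]
      simp only [Nat.choose_succ_self, Nat.cast_zero, zero_mul, add_zero]
      rw [Finset.sum_range_succ'
        (fun i => (n.choose i : ℝ) * iteratedDeriv i f x * iteratedDeriv (n-i+1) g x) n]
      congr 1
      · apply Finset.sum_congr rfl
        intro i hi
        simp only [Finset.mem_range] at hi
        have : n - i = n - (i+1) + 1 := by omega
        rw [this]
      · simp
    rw [key]


noncomputable def dd : ℝ → ℝ := dslope Real.exp 0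
noncomputable def ee : ℝ → ℝ := dslope dd 0
noncomputable def HH : ℝ → ℝ := fun x => -1 + ee x / dd x

lemma dd_apply {x : ℝ} (hx : x ≠ 0) : dd x = (Real.exp x - 1) / x := by
  rw [dd, dslope_of_ne _ hx, slope_def_field]
  simp [div_eq_div_iff]

lemma dd_zero : dd 0 = 1 := by
  rw [dd, dslope_same, Real.deriv_exp, Real.exp_zero]

lemma dd_ne_zero (x : ℝ) : dd x ≠ 0 := by
  rcases eq_or_ne x 0 with rfl | hx
  · rw [dd_zero]; norm_num
  · rw [dd_apply hx]
    exact div_ne_zero (sub_ne_zero.2 (by rw [← Real.exp_zero]; exact fun h => hx (Real.exp_eq_exp.mp h))) hx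

lemma dd_analyticAt (x : ℝ) : AnalyticAt ℝ dd x := by
  rcases eq_or_ne x 0 with rfl | hx
  · obtain ⟨p, hp⟩ := analyticAt_rexp (x := (0:ℝ))
    exact ⟨p.fslope, hp.has_fpower_series_dslope_fslope⟩
  · apply AnalyticAt.congr (f := fun y => (Real.exp y - 1) * (y - 0)⁻¹)
    · exact ((analyticAt_rexp.sub analyticAt_const).mul
        ((analyticAt_id.sub analyticAt_const).inv (by simpa using hx)))
    · filter_upwards [isOpen_ne.eventually_mem hx] with y hy
      rw [dd_apply hy, div_eq_mul_inv, sub_zero]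

lemma ee_analyticAt (x : ℝ) : AnalyticAt ℝ ee x := by
  rcases eq_or_ne x 0 with rfl | hx
  · obtain ⟨p, hp⟩ := dd_analyticAt 0
    exact ⟨p.fslope, hp.has_fpower_series_dslope_fslope⟩
  · apply AnalyticAt.congr (f := fun y => (dd y - dd 0) * (y - 0)⁻¹)
    · exact (((dd_analyticAt x).sub analyticAt_const).mul
        ((analyticAt_id.sub analyticAt_const).inv (by simpa using hx)))
    · filter_upwards [isOpen_ne.eventually_mem hx] with y hy
      rw [ee, dslope_of_ne _ hy, slope_def_field, div_eq_mul_inv]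

lemma HH_analyticAt (x : ℝ) : AnalyticAt ℝ HH x :=
  analyticAt_const.add ((ee_analyticAt x).div (dd_analyticAt x) (dd_ne_zero x))

lemma HH_contDiff : ContDiff ℝ ∞ HH := by
  apply contDiff_iff_contDiffAt.2
  intro x
  exact (HH_analyticAt x).contDiffAt.of_le le_top

lemma HH_eq {x : ℝ} (hx : x ≠ 0) :
    HH x = Real.exp x / (1 - Real.exp x) + 1 / x := by
  have he : Real.exp x - 1 ≠ 0 := sub_ne_zero.2 (by rw [← Real.exp_zero]; exact fun h => hx (Real.exp_eq_exp.mp h))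
  have h1 : (1:ℝ) - Real.exp x ≠ 0 := fun h => he (by linarith [sub_eq_zero.1 h])
  rw [HH, dd_apply hx, ee, dslope_of_ne _ hx, slope_def_field, dd_apply hx, dd_zero]
  field_simp
  ring

lemma HH_funeq (x : ℝ) :
    (HH x + 1) * (x * (Real.exp x - 1)) = Real.exp x - 1 - x := by
  rcases eq_or_ne x 0 with rfl | hx
  · simp
  · have he : Real.exp x - 1 ≠ 0 := sub_ne_zero.2 (by rw [← Real.exp_zero]; exact fun h => hx (Real.exp_eq_exp.mp h))
    have h1 : (1:ℝ) - Real.exp x ≠ 0 := fun h => he (by linarith [sub_eq_zero.1 h])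
    rw [HH_eq hx]
    field_simp
    ring


noncomputable def uu : ℝ → ℝ := fun x => x * (Real.exp x - 1)
noncomputable def RR : ℝ → ℝ := fun x => Real.exp x - 1 - x

lemma uu_contDiff : ContDiff ℝ ∞ uu :=
  contDiff_id.mul (Real.contDiff_exp.sub contDiff_const)

lemma deriv_uu : deriv uu = fun x => Real.exp x - 1 + x * Real.exp x := by
  funext x
  have h : HasDerivAt uu ((Real.exp x - 1) + x * Real.exp x) x := by
    have h' := (hasDerivAt_id x).fun_mul ((Real.hasDerivAt_exp x).sub_const 1)
    simp [uu] at h' ⊢; exact h'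
  exact h.deriv

lemma deriv_uu' : deriv (fun x => Real.exp x - 1 + x * Real.exp x)
    = fun x => (x + 2) * Real.exp x := by
  funext x
  have h : HasDerivAt (fun x => Real.exp x - 1 + x * Real.exp x)
      (Real.exp x + (Real.exp x + x * Real.exp x)) x := by
    exact ((Real.hasDerivAt_exp x).sub_const 1).add
      (((hasDerivAt_id x).mul (Real.hasDerivAt_exp x)).congr_deriv (by simp only [id_eq]; ring))
  have := h.deriv
  rw [this]; ring

lemma iteratedDeriv_uu_two (k : ℕ) :
    iteratedDeriv (k + 2) uu = fun x => (x + (k + 2)) * Real.exp x := by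
  induction k with
  | zero =>
    rw [iteratedDeriv_succ, iteratedDeriv_one, deriv_uu, deriv_uu']
    norm_num
  | succ k ih =>
    rw [iteratedDeriv_succ, ih]
    funext x
    have h : HasDerivAt (fun x => (x + ((k:ℝ) + 2)) * Real.exp x)
        (Real.exp x + (x + ((k:ℝ)+2)) * Real.exp x) x := by
      simpa using ((hasDerivAt_id x).add_const ((k:ℝ)+2)).fun_mul (Real.hasDerivAt_exp x)
    rw [h.deriv]
    push_cast
    ring

lemma iteratedDeriv_uu_zero (j : ℕ) :
    iteratedDeriv j uu 0 = if j ≤ 1 then 0 else (j : ℝ) := by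
  match j with
  | 0 => simp [uu]
  | 1 => rw [iteratedDeriv_one, deriv_uu]; simp
  | (k+2) =>
    rw [iteratedDeriv_uu_two k]
    have : ¬ (k + 2 ≤ 1) := by omega
    simp [this]

lemma RR_iteratedDeriv_two (k : ℕ) : iteratedDeriv (k+2) RR = Real.exp := by
  induction k with
  | zero =>
    have h1 : deriv RR = fun x => Real.exp x - 1 := by
      funext x
      have h : HasDerivAt RR (Real.exp x - 1) x := by
        have h' := ((Real.hasDerivAt_exp x).sub_const 1).fun_sub (hasDerivAt_id x)
        simp [RR] at h' ⊢; exact h'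
      exact h.deriv
    rw [iteratedDeriv_succ, iteratedDeriv_one, h1]
    funext x
    exact (((Real.hasDerivAt_exp x).sub_const 1)).deriv
  | succ k ih =>
    rw [iteratedDeriv_succ, ih]
    exact Real.deriv_exp

lemma RR_iteratedDeriv_zero (j : ℕ) :
    iteratedDeriv j RR 0 = if j ≤ 1 then 0 else 1 := by
  match j with
  | 0 => simp [RR]
  | 1 =>
    rw [iteratedDeriv_one]
    have h1 : deriv RR = fun x => Real.exp x - 1 := by
      funext x
      have h : HasDerivAt RR (Real.exp x - 1) x := by
        have h' := ((Real.hasDerivAt_exp x).sub_const 1).fun_sub (hasDerivAt_id x)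
        simp [RR] at h' ⊢; exact h'
      exact h.deriv
    rw [h1]; simp
  | (k+2) =>
    rw [RR_iteratedDeriv_two k]
    have : ¬ (k + 2 ≤ 1) := by omega
    simp [this]


lemma bident (m : ℕ) :
    ∑ i ∈ Finset.range (m+1),
      ((m+2).choose i : ℚ) * ((m+2-i : ℕ) : ℚ) * (-(_root_.bernoulli (i+1))/(i+1)) = 1 := by
  have hb := _root_.sum_bernoulli (m+2)
  have hne : ¬ (m + 2 = 1) := by omega
  rw [if_neg hne] at hb
  rw [Finset.sum_range_succ' (fun j => ((m+2).choose j : ℚ) * _root_.bernoulli j) (m+1)] at hb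
  simp only [Nat.choose_zero_right, Nat.cast_one, _root_.bernoulli_zero, one_mul] at hb
  -- hb : ∑ i in range (m+1), C(m+2,i+1) * B (i+1) + 1 = 0
  have hterm : ∀ i ∈ Finset.range (m+1),
      ((m+2).choose i : ℚ) * ((m+2-i : ℕ) : ℚ) * (-(_root_.bernoulli (i+1))/(i+1))
      = -(((m+2).choose (i+1) : ℚ) * _root_.bernoulli (i+1)) := by
    intro i hi
    simp only [Finset.mem_range] at hi
    have hch : ((m+2).choose (i+1) : ℚ) * (i+1) = ((m+2).choose i : ℚ) * ((m+2-i : ℕ) : ℚ) := by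
      rw [← Nat.cast_succ, ← Nat.cast_mul, ← Nat.cast_mul, Nat.choose_succ_right_eq]
    have hi1 : ((i:ℚ)+1) ≠ 0 := by positivity
    field_simp
    linear_combination (_root_.bernoulli (i+1)) * hch
  rw [Finset.sum_congr rfl hterm, Finset.sum_neg_distrib]
  linarith [hb]

noncomputable def GG : ℝ → ℝ := fun x => HH x + 1

lemma GG_contDiff : ContDiff ℝ ∞ GG := HH_contDiff.add contDiff_const

lemma gg_recurrence (m : ℕ) :
    ∑ i ∈ Finset.range (m+1),
      ((m+2).choose i : ℝ) * ((m+2-i : ℕ) : ℝ) * iteratedDeriv i GG 0 = 1 := by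
  have hmul := congrFun (my_iteratedDeriv_mul GG_contDiff uu_contDiff (m+2)) 0
  have hfe : (fun y => GG y * uu y) = RR := funext fun y => HH_funeq y
  rw [hfe, RR_iteratedDeriv_zero] at hmul
  have h2 : ¬ (m + 2 ≤ 1) := by omega
  rw [if_neg h2] at hmul
  rw [Finset.sum_range_succ, Finset.sum_range_succ] at hmul
  have e2 : iteratedDeriv (m+2-(m+2)) uu 0 = 0 := by
    simp [iteratedDeriv_uu_zero]
  have e1 : iteratedDeriv (m+2-(m+1)) uu 0 = 0 := by
    have : m+2-(m+1) = 1 := by omega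
    rw [this, iteratedDeriv_uu_zero]; norm_num
  rw [e1, e2] at hmul
  simp only [mul_zero, add_zero] at hmul
  refine Eq.trans ?_ hmul.symm
  apply Finset.sum_congr rfl
  intro i hi
  simp only [Finset.mem_range] at hi
  have h3 : ¬ (m+2-i ≤ 1) := by omega
  rw [iteratedDeriv_uu_zero, if_neg h3]
  ring

lemma gg_val : ∀ m : ℕ, iteratedDeriv m GG 0 = -((_root_.bernoulli (m+1) : ℚ) : ℝ)/((m:ℝ)+1) := by
  intro m
  induction m using Nat.strong_induction_on with
  | _ m IH =>
  have hrec := gg_recurrence m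
  have hq := bident m
  have hR : ∑ i ∈ Finset.range (m+1),
      ((m+2).choose i : ℝ) * ((m+2-i : ℕ) : ℝ) * (-((_root_.bernoulli (i+1) : ℚ) : ℝ)/((i:ℝ)+1)) = 1 := by
    have := congrArg (fun q : ℚ => (q : ℝ)) hq
    push_cast at this ⊢
    convert this using 2 with i hi
  rw [Finset.sum_range_succ] at hrec hR
  have hsame : ∑ i ∈ Finset.range m,
        ((m+2).choose i : ℝ) * ((m+2-i : ℕ) : ℝ) * iteratedDeriv i GG 0
      = ∑ i ∈ Finset.range m,
        ((m+2).choose i : ℝ) * ((m+2-i : ℕ) : ℝ) * (-((_root_.bernoulli (i+1) : ℚ) : ℝ)/((i:ℝ)+1)) := by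
    apply Finset.sum_congr rfl
    intro i hi
    rw [IH i (Finset.mem_range.1 hi)]
  rw [hsame] at hrec
  have hkey : ((m+2).choose m : ℝ) * ((m+2-m : ℕ) : ℝ) * iteratedDeriv m GG 0
      = ((m+2).choose m : ℝ) * ((m+2-m : ℕ) : ℝ) * (-((_root_.bernoulli (m+1) : ℚ) : ℝ)/((m:ℝ)+1)) := by
    linarith [hrec, hR]
  have hC : ((m+2).choose m : ℝ) * ((m+2-m : ℕ) : ℝ) ≠ 0 := by
    have : m+2-m = 2 := by omega
    rw [this]
    have hpos : 0 < (m+2).choose m := Nat.choose_pos (by omega)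
    positivity
  exact mul_left_cancel₀ hC hkey



noncomputable def Phi (n : ℕ) : ℝ → ℝ := fun y =>
  Real.exp y * Polynomial.aeval (Real.exp y) (eulerianPoly n) / (1 - Real.exp y)^(n+1)

lemma one_sub_exp_ne {x : ℝ} (hx : x ≠ 0) : (1:ℝ) - Real.exp x ≠ 0 := by
  intro h
  have : Real.exp x = Real.exp 0 := by rw [Real.exp_zero]; linarith [sub_eq_zero.1 h]
  exact hx (Real.exp_eq_exp.mp this)

lemma hasDerivAt_Phi (n : ℕ) {x : ℝ} (hx : x ≠ 0) :
    HasDerivAt (Phi n) (Phi (n+1) x) x := by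
  set P : Polynomial ℝ := (eulerianPoly n).map (algebraMap ℤ ℝ) with hP
  have haev : ∀ y : ℝ, Polynomial.aeval y (eulerianPoly n) = P.eval y := by
    intro y; rw [hP, Polynomial.eval_map, Polynomial.aeval_def]
  have h1 : (1:ℝ) - Real.exp x ≠ 0 := one_sub_exp_ne hx
  have hnum : HasDerivAt (fun y => Real.exp y * P.eval (Real.exp y))
      (Real.exp x * P.eval (Real.exp x)
        + Real.exp x * (P.derivative.eval (Real.exp x) * Real.exp x)) x :=
    (Real.hasDerivAt_exp x).mul ((P.hasDerivAt (Real.exp x)).comp x (Real.hasDerivAt_exp x))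
  have hden : HasDerivAt (fun y => ((1:ℝ) - Real.exp y)^(n+1))
      ((n+1 : ℕ) * ((1:ℝ) - Real.exp x)^n * (0 - Real.exp x)) x := by
    have := (((hasDerivAt_const x (1:ℝ)).fun_sub (Real.hasDerivAt_exp x)).fun_pow (n+1))
    simp at this ⊢; exact this
  have hdiv := hnum.fun_div hden (pow_ne_zero _ h1)
  have heq : (fun y => Real.exp y * P.eval (Real.exp y) / ((1:ℝ) - Real.exp y)^(n+1)) = Phi n := by
    funext y; rw [Phi, haev]
  rw [heq] at hdiv
  refine hdiv.congr_deriv ?_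
  -- unfold eulerianPoly (n+1) through the map
  have hmap : Polynomial.aeval (Real.exp x) (eulerianPoly (n+1))
      = (1 + (n:ℝ) * Real.exp x) * P.eval (Real.exp x)
        + Real.exp x * (1 - Real.exp x) * P.derivative.eval (Real.exp x) := by
    rw [show eulerianPoly (n+1) = (1 + Polynomial.C (n : ℤ) * Polynomial.X) * eulerianPoly n
      + Polynomial.X * (1 - Polynomial.X) * Polynomial.derivative (eulerianPoly n) from rfl]
    simp only [map_add, map_mul, map_one, map_sub, Polynomial.aeval_X, Polynomial.aeval_C, haev]
    rw [show Polynomial.aeval (Real.exp x) (Polynomial.derivative (eulerianPoly n))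
        = P.derivative.eval (Real.exp x) by
      rw [hP, Polynomial.derivative_map, Polynomial.eval_map, Polynomial.aeval_def]]
    push_cast
    ring
  simp only [Phi]
  rw [hmap]
  set u := Real.exp x
  set a := P.eval u
  set b := P.derivative.eval u
  have hpow : ((1:ℝ) - u)^(n+1+1) = (1-u)^(n+1) * (1-u) := by ring
  field_simp
  push_cast
  ring

lemma hasDerivAt_S (n : ℕ) {x : ℝ} (hx : x ≠ 0) :
    HasDerivAt (fun y => (-1:ℝ)^n * n.factorial / y^(n+1))
      ((-1:ℝ)^(n+1) * (n+1).factorial / x^(n+2)) x := by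
  have hp : HasDerivAt (fun y : ℝ => (y^(n+1))⁻¹)
      (-(((n+1:ℕ) : ℝ) * x^(n+1-1)) / (x^(n+1))^2) x :=
    (hasDerivAt_pow (n+1) x).inv (pow_ne_zero _ hx)
  have h2 := hp.const_mul ((-1:ℝ)^n * (n.factorial : ℝ))
  have hfun : (fun y => (-1:ℝ)^n * (n.factorial : ℝ) * (y^(n+1))⁻¹)
      = (fun y => (-1:ℝ)^n * (n.factorial : ℝ) / y^(n+1)) := by
    funext y; rw [div_eq_mul_inv]
  rw [hfun] at h2
  refine h2.congr_deriv ?_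
  have hxp : x^(n+1) ≠ 0 := pow_ne_zero _ hx
  rw [Nat.add_sub_cancel, Nat.factorial_succ]
  field_simp
  push_cast
  ring


lemma iteratedDeriv_HH (n : ℕ) : ∀ x : ℝ, x ≠ 0 →
    iteratedDeriv n HH x = Phi n x + (-1:ℝ)^n * n.factorial / x^(n+1) := by
  induction n with
  | zero =>
    intro x hx
    rw [iteratedDeriv_zero, HH_eq hx]
    simp [Phi, eulerianPoly]
  | succ n ih =>
    intro x hx
    rw [iteratedDeriv_succ]
    have hev : (iteratedDeriv n HH) =ᶠ[nhds x]
        (fun y => Phi n y + (-1:ℝ)^n * n.factorial / y^(n+1)) := by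
      filter_upwards [isOpen_ne.eventually_mem hx] with y hy
      exact ih y hy
    rw [hev.deriv_eq]
    exact ((hasDerivAt_Phi n hx).add (hasDerivAt_S n hx)).deriv


theorem limit_even_case_eq_zeta (p : ℕ) (hp : 1 ≤ p) :
    Filter.Tendsto
      (fun w : ℝ =>
        ((((-1 : ℝ) ^ p / 2) *
            ((2 * Real.pi) ^ (2 * p) * Real.exp (2 * Real.pi * w) *
                Polynomial.aeval (Real.exp (2 * Real.pi * w)) (eulerianPoly (2 * p - 1)) /
                ((Nat.factorial (2 * p - 1) : ℝ) * (1 - Real.exp (2 * Real.pi * w)) ^ (2 * p))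
              - 1 / w ^ (2 * p)) : ℝ) : ℂ))
      (nhdsWithin 0 {0}ᶜ) (nhds (riemannZeta (2 * p))) := by
  have hp0 : p ≠ 0 := by omega
  obtain ⟨m, hm⟩ : ∃ m, 2*p = m+1 := ⟨2*p-1, by omega⟩
  have hm1 : 1 ≤ m := by omega
  have hmodd : Odd m := ⟨p-1, by omega⟩
  have hπ : (2:ℝ)*Real.pi ≠ 0 := mul_ne_zero two_ne_zero Real.pi_ne_zero
  rw [hm]
  simp only [Nat.add_sub_cancel]
  set c : ℝ := iteratedDeriv m HH 0 with hc
  have hval : c = -((_root_.bernoulli (m+1) : ℚ) : ℝ)/((m:ℝ)+1) := by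
    rw [hc, ← my_iteratedDeriv_one_add (f := HH) m hm1]
    exact gg_val m
  set L : ℝ := ((-1:ℝ)^p/2) * ((2*Real.pi)^(m+1) / (Nat.factorial m) * c) with hL
  have hcont : Continuous (iteratedDeriv m HH) := HH_contDiff.continuous_iteratedDeriv m (by exact_mod_cast le_top)
  have h2 : Tendsto (fun w : ℝ => 2*Real.pi*w) (nhds 0) (nhds 0) := by
    simpa using (continuous_const.fun_mul continuous_id).tendsto (0:ℝ)
  have h1 : Tendsto (fun w : ℝ => iteratedDeriv m HH (2*Real.pi*w)) (nhds 0) (nhds c) :=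
    (hcont.tendsto 0).comp h2
  have htend : Tendsto (fun w : ℝ => ((-1:ℝ)^p/2) *
      ((2*Real.pi)^(m+1) / (Nat.factorial m) * iteratedDeriv m HH (2*Real.pi*w)))
      (nhdsWithin 0 {0}ᶜ) (nhds L) := by
    apply Tendsto.mono_left _ nhdsWithin_le_nhds
    exact ((h1.const_mul _).const_mul _)
  have hreal : Tendsto (fun w : ℝ =>
      (((-1 : ℝ) ^ p / 2) *
            ((2 * Real.pi) ^ (m+1) * Real.exp (2 * Real.pi * w) *
                Polynomial.aeval (Real.exp (2 * Real.pi * w)) (eulerianPoly m) /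
                ((Nat.factorial m : ℝ) * (1 - Real.exp (2 * Real.pi * w)) ^ (m+1))
              - 1 / w ^ (m+1))))
      (nhdsWithin 0 {0}ᶜ) (nhds L) := by
    apply htend.congr'
    filter_upwards [self_mem_nhdsWithin] with w hw
    have hw0 : w ≠ 0 := hw
    have hx : 2*Real.pi*w ≠ 0 := mul_ne_zero hπ hw0
    rw [iteratedDeriv_HH m _ hx]
    simp only [Phi]
    rw [hmodd.neg_one_pow]
    have hd : (1:ℝ) - Real.exp (2*Real.pi*w) ≠ 0 := one_sub_exp_ne hx
    have hxp : ((2*Real.pi)*w)^(m+1) = (2*Real.pi)^(m+1) * w^(m+1) := mul_pow _ _ _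
    have hfac : (Nat.factorial m : ℝ) ≠ 0 := Nat.cast_ne_zero.2 (Nat.factorial_ne_zero m)
    field_simp
    ring
  have hz : ((L : ℝ) : ℂ) = riemannZeta (2 * p) := by
    rw [riemannZeta_two_mul_nat hp0, hL, hval, hm]
    simp only [Nat.add_sub_cancel]
    have hfac : ((Nat.factorial (m+1) : ℂ)) = (m+1) * (Nat.factorial m : ℂ) := by
      rw [Nat.factorial_succ]; push_cast; ring
    have hfm : (Nat.factorial m : ℂ) ≠ 0 := Nat.cast_ne_zero.2 (Nat.factorial_ne_zero m)
    have hm1C : ((m:ℂ)+1) ≠ 0 := by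
      have := Nat.cast_ne_zero (R := ℂ).2 (Nat.succ_ne_zero m)
      push_cast at this
      exact this
    push_cast
    rw [hfac]
    have hneg : ((-1:ℂ))^(p+1) = -((-1:ℂ))^p := by rw [pow_succ]; ring
    rw [hneg]
    have h2pow : ((2:ℂ)*Real.pi)^(m+1) = 2^(m+1) * (Real.pi:ℂ)^(m+1) := mul_pow _ _ _
    rw [h2pow]
    have h2m : (2:ℂ)^(m+1) = 2 * 2^m := by rw [pow_succ]; ring
    rw [h2m]
    field_simp
  rw [← hz]
  exact (Complex.continuous_ofReal.tendsto L).comp hreal
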